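/- Let d be a homogeneous generalized cyclotomic derivation of K[S] of degree s-1 with blocks S_1,...,S_k, let N = 1+s+...+s^{k-1}, ξ a primitive N-th root of unity, q_i = Σ_{j=0}^{i} s^j, and let σ be the K-algebra automorphism of K[S] given by σ(x_{k-i,j}) = ξ^{q_i}·x_{k-i,j} for 0 ≤ i ≤ k-1. Then σ^{-1}∘d∘σ = ξ·d. -/

import Mathlib

open MvPolynomial Finset

/-- For a homogeneous generalized cyclotomic derivation `d` (blocks `S_1,…,S_k`, each variable of
a block sent to a monomial of total degree `s` in the next block, cyclically), with
`N = 1 + s + ⋯ + s^(k-1)`, `ξ` a primitive `N`-th root of unity, `q_i = Σ_{j=0}^{i} s^j`, the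
automorphism `σ` scaling the variables of block `S_{k-i}` by `ξ^(q_i)` satisfies
`σ⁻¹ ∘ d ∘ σ = ξ • d`.  (Block `S_b` of the paper corresponds to the fibre `blk x = b - 1`,
so block `S_{k-i}` is scaled by `ξ ^ q i` with `i = k - 1 - blk x`.) -/
theorem genCyclotomic_conjugation
    (K : Type*) [Field K] [CharZero K] (n k s : ℕ) (hk : 2 ≤ k) (hs : 1 ≤ s) [NeZero k]
    (N : ℕ) (hN : N = ∑ j ∈ range k, s ^ j)
    (ξ : K) (hξ : IsPrimitiveRoot ξ N)
    (d : Derivation K (MvPolynomial (Fin n) K) (MvPolynomial (Fin n) K))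
    (blk : Fin n → Fin k) (α : Fin n → Fin n → ℕ)
    (hdX : ∀ x : Fin n, d (MvPolynomial.X x) = ∏ y : Fin n, MvPolynomial.X y ^ α x y)
    (hblk : ∀ x y : Fin n, α x y ≠ 0 → blk y = blk x + 1)
    (hdeg : ∀ x : Fin n, ∑ y : Fin n, α x y = s)
    (q : ℕ → ℕ) (hq : ∀ i, q i = ∑ j ∈ range (i + 1), s ^ j)
    (σ : MvPolynomial (Fin n) K ≃ₐ[K] MvPolynomial (Fin n) K)
    (hσ : ∀ x : Fin n, σ (MvPolynomial.X x)
      = MvPolynomial.C (ξ ^ q (k - 1 - (blk x : ℕ))) * MvPolynomial.X x) :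
    ∀ p : MvPolynomial (Fin n) K, σ.symm (d (σ p)) = MvPolynomial.C ξ * d p := by
  -- basic facts
  have hN0 : N ≠ 0 := by
    rw [hN]
    have : 0 < ∑ j ∈ range k, s ^ j :=
      Finset.sum_pos (fun j _ => pow_pos (by omega) j) (by simp; omega)
    omega
  have hξ0 : ξ ≠ 0 := hξ.ne_zero hN0
  have hCc : ∀ a : K, σ (MvPolynomial.C a) = MvPolynomial.C a := fun a => σ.commutes a
  have hCc' : ∀ a : K, σ.symm (MvPolynomial.C a) = MvPolynomial.C a := fun a => σ.symm.commutes a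
  -- inverse action on variables
  have hsymmX : ∀ y : Fin n, σ.symm (MvPolynomial.X y)
      = MvPolynomial.C ((ξ ^ q (k - 1 - (blk y : ℕ)))⁻¹) * MvPolynomial.X y := by
    intro y
    have hc : (ξ ^ q (k - 1 - (blk y : ℕ))) ≠ 0 := pow_ne_zero _ hξ0
    have h1 : σ (MvPolynomial.C ((ξ ^ q (k - 1 - (blk y : ℕ)))⁻¹) * MvPolynomial.X y)
        = MvPolynomial.X y := by
      rw [map_mul, hCc, hσ y, ← mul_assoc, ← MvPolynomial.C_mul, inv_mul_cancel₀ hc,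
        MvPolynomial.C_1, one_mul]
    conv_lhs => rw [← h1, σ.symm_apply_apply]
  -- key computation on variables
  have key : ∀ x : Fin n, σ.symm (d (σ (MvPolynomial.X x)))
      = MvPolynomial.C ξ * d (MvPolynomial.X x) := by
    intro x
    rw [hσ x]
    have hdC : d (MvPolynomial.C (ξ ^ q (k - 1 - (blk x : ℕ)))) = 0 := by
      have := d.map_algebraMap (ξ ^ q (k - 1 - (blk x : ℕ)))
      simp only [← MvPolynomial.algebraMap_eq]; exact this
    rw [d.leibniz, hdC, smul_zero, add_zero, smul_eq_mul, map_mul, hCc', hdX x, map_prod]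
    have hXpow : (∏ y : Fin n, σ.symm (MvPolynomial.X y ^ α x y))
        = ∏ y : Fin n, MvPolynomial.C (((ξ ^ q (k - 1 - (blk y : ℕ)))⁻¹) ^ α x y)
            * MvPolynomial.X y ^ α x y := by
      refine Finset.prod_congr rfl fun y _ => ?_
      rw [map_pow, hsymmX y, mul_pow, ← MvPolynomial.C_pow]
    rw [hXpow, Finset.prod_mul_distrib, ← map_prod,
      ← mul_assoc, ← MvPolynomial.C_mul]
    congr 1
    congr 1
    -- scalar identity
    set j : ℕ := k - 1 - ((blk x + 1 : Fin k) : ℕ) with hj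
    have hprod : ∏ y : Fin n, ((ξ ^ q (k - 1 - (blk y : ℕ)))⁻¹) ^ α x y
        = ((ξ ^ q j)⁻¹) ^ s := by
      have : ∀ y : Fin n, ((ξ ^ q (k - 1 - (blk y : ℕ)))⁻¹) ^ α x y
          = ((ξ ^ q j)⁻¹) ^ α x y := by
        intro y
        by_cases h : α x y = 0
        · simp [h]
        · rw [hblk x y h]
      rw [Finset.prod_congr rfl (fun y _ => this y), Finset.prod_pow_eq_pow_sum, hdeg x]
    rw [hprod]
    rcases Nat.lt_or_ge ((blk x : ℕ)) (k - 1) with hb | hb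
    · -- non-wrap case
      have hval : ((blk x + 1 : Fin k) : ℕ) = (blk x : ℕ) + 1 := by
        have : ((1 : Fin k) : ℕ) = 1 := by
          have : 1 < k := by omega
          simp [Fin.val_one', Nat.mod_eq_of_lt this]
        rw [Fin.val_add, this, Nat.mod_eq_of_lt (by omega)]
      have hjj : k - 1 - (blk x : ℕ) = j + 1 := by rw [hj, hval]; omega
      rw [hjj]
      have hqs : q (j + 1) = 1 + s * q j := by
        rw [hq, hq, geom_sum_succ]; ring
      have hps : ξ ^ (1 + s * q j) = ξ * (ξ ^ q j) ^ s := by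
        rw [pow_add, pow_one, pow_mul']
      rw [hqs, hps, mul_assoc, ← mul_pow, mul_inv_cancel₀ (pow_ne_zero _ hξ0),
        one_pow, mul_one]
    · -- wrap case : blk x = k - 1
      have hbx : (blk x : ℕ) = k - 1 := by have := (blk x).isLt; omega
      have hval : ((blk x + 1 : Fin k) : ℕ) = 0 := by
        have : ((1 : Fin k) : ℕ) = 1 := by
          have : 1 < k := by omega
          simp [Fin.val_one', Nat.mod_eq_of_lt this]
        rw [Fin.val_add, this, hbx]
        simp [Nat.sub_add_cancel (by omega : 1 ≤ k)]
      have hjN : q j = N := by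
        rw [hj, hval, Nat.sub_zero, hq, hN, Nat.sub_add_cancel (by omega : 1 ≤ k)]
      have hq0 : q (k - 1 - (blk x : ℕ)) = 1 := by
        rw [hbx, Nat.sub_self, hq]; simp
      rw [hq0, hjN, hξ.pow_eq_one, inv_one, one_pow, pow_one, mul_one]
  -- main induction
  intro p
  induction p using MvPolynomial.induction_on with
  | C a =>
      have : d (MvPolynomial.C a) = 0 := by
        have := d.map_algebraMap a
        simp only [← MvPolynomial.algebraMap_eq]; exact this
      rw [hCc, this, map_zero, mul_zero]
  | add p q' hp hq' =>
      simp [map_add, hp, hq', mul_add]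
  | mul_X p x hp =>
      rw [map_mul, d.leibniz, map_add, smul_eq_mul, smul_eq_mul, map_mul, map_mul,
        σ.symm_apply_apply, σ.symm_apply_apply, hp, key x, d.leibniz, smul_eq_mul, smul_eq_mul]
      ring
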